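/- In the scalar case n = 1 with q'(x*) ≠ 1, the AA(1) map Ψ : ℝ² → ℝ² is not (Fréchet) differentiable at z* = (x*, x*): its directional derivative at z* equals (0, d₁) whenever d₁ ≠ d₂ but equals ((1-a) d₁, d₁) with a = 1 - q'(x*) when d₁ = d₂, and these are inconsistent with a single linear map unless q'(x*) = 0. -/

import Mathlib

open scoped Topology
open Filter

noncomputable section

/-- Scalar residual `r(x) = x - q(x)`. -/
def rs (q : ℝ → ℝ) (x : ℝ) : ℝ := x - q x

open Classical in
/-- Scalar AA(1) coefficient. -/
def betas (q : ℝ → ℝ) (p : ℝ × ℝ) : ℝ :=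
  if rs q p.1 = rs q p.2 then 0
  else -(rs q p.1 * (rs q p.1 - rs q p.2)) / (rs q p.1 - rs q p.2) ^ 2

/-- Scalar AA(1) map `Ψ`. -/
def Psis (q : ℝ → ℝ) (p : ℝ × ℝ) : ℝ × ℝ :=
  (q p.1 + betas q p * (q p.1 - q p.2), p.1)

lemma hasDerivAt_line (f : ℝ → ℝ) (c x d : ℝ) (hf : HasDerivAt f c x) :
    HasDerivAt (fun h : ℝ => f (x + h * d)) (c * d) 0 := by
  have h1 : HasDerivAt (fun h : ℝ => x + h * d) d 0 := by
    simpa using ((hasDerivAt_id (0:ℝ)).mul_const d).const_add x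
  have hf' : HasDerivAt f c (x + 0 * d) := by simpa using hf
  exact hf'.comp (0:ℝ) h1

lemma tendsto_slope_line (f : ℝ → ℝ) (c x d : ℝ) (hf : HasDerivAt f c x) :
    Tendsto (fun h : ℝ => (f (x + h * d) - f x) / h) (𝓝[>] (0:ℝ)) (𝓝 (c * d)) := by
  have h1 := (hasDerivAt_line f c x d hf)
  rw [hasDerivAt_iff_tendsto_slope] at h1
  have h2 : Tendsto (slope (fun h : ℝ => f (x + h * d)) 0) (𝓝[>] (0:ℝ)) (𝓝 (c * d)) :=
    h1.mono_left (nhdsWithin_mono _ (fun h hh => ne_of_gt hh))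
  refine h2.congr fun h => ?_
  simp [slope_def_field]

lemma Psis_fix (q : ℝ → ℝ) (xs : ℝ) (hfix : q xs = xs) : Psis q (xs, xs) = (xs, xs) := by
  simp [Psis, betas, hfix]

-- Part (ii): equal directions
lemma part2 (q : ℝ → ℝ) (xs m : ℝ) (hfix : q xs = xs) (hm : HasDerivAt q m xs) (d : ℝ) :
    Tendsto (fun h : ℝ => h⁻¹ • (Psis q ((xs, xs) + h • (d, d)) - Psis q (xs, xs)))
      (𝓝[>] 0) (𝓝 (m * d, d)) := by
  have key : ∀ h : ℝ, h⁻¹ • (Psis q ((xs, xs) + h • (d, d)) - Psis q (xs, xs))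
      = (h⁻¹ * (q (xs + h * d) - xs), h⁻¹ * (h * d)) := by
    intro h
    simp [Psis, betas, Prod.smul_mk, Prod.mk_add_mk, Prod.mk_sub_mk, hfix, smul_eq_mul]
  have t1 : Tendsto (fun h : ℝ => h⁻¹ * (q (xs + h * d) - xs)) (𝓝[>] (0:ℝ)) (𝓝 (m * d)) := by
    have := tendsto_slope_line q m xs d hm
    rw [hfix] at this
    exact this.congr fun h => div_eq_inv_mul _ _
  have t2 : Tendsto (fun h : ℝ => h⁻¹ * (h * d)) (𝓝[>] (0:ℝ)) (𝓝 d) := by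
    refine tendsto_const_nhds.congr' ?_
    filter_upwards [self_mem_nhdsWithin] with h hh
    exact (inv_mul_cancel_left₀ (ne_of_gt hh) _).symm
  exact (t1.prodMk_nhds t2).congr fun h => (key h).symm

-- Part (i): distinct directions
lemma part1 (q : ℝ → ℝ) (xs m : ℝ) (hfix : q xs = xs) (hm : HasDerivAt q m xs)
    (hm1 : m ≠ 1) (d₁ d₂ : ℝ) (hd : d₁ ≠ d₂) :
    Tendsto (fun h : ℝ => h⁻¹ • (Psis q ((xs, xs) + h • (d₁, d₂)) - Psis q (xs, xs)))
      (𝓝[>] 0) (𝓝 (0, d₁)) := by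
  have hr : HasDerivAt (rs q) (1 - m) xs := by
    exact (hasDerivAt_id xs).sub hm
  have hrs0 : rs q xs = 0 := by simp [rs, hfix]
  have hu : Tendsto (fun h : ℝ => rs q (xs + h * d₁) / h) (𝓝[>] (0:ℝ)) (𝓝 ((1 - m) * d₁)) := by
    have := tendsto_slope_line (rs q) (1 - m) xs d₁ hr
    rw [hrs0] at this; simpa using this
  have hv : Tendsto (fun h : ℝ => rs q (xs + h * d₂) / h) (𝓝[>] (0:ℝ)) (𝓝 ((1 - m) * d₂)) := by
    have := tendsto_slope_line (rs q) (1 - m) xs d₂ hr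
    rw [hrs0] at this; simpa using this
  have hw : Tendsto (fun h : ℝ => (rs q (xs + h * d₁) - rs q (xs + h * d₂)) / h)
      (𝓝[>] (0:ℝ)) (𝓝 ((1 - m) * (d₁ - d₂))) := by
    have := hu.sub hv
    rw [show (1-m)*d₁ - (1-m)*d₂ = (1-m)*(d₁-d₂) by ring] at this
    exact this.congr fun h => (sub_div _ _ _).symm
  have hne : (1 - m) * (d₁ - d₂) ≠ 0 :=
    mul_ne_zero (sub_ne_zero.2 fun h => hm1 h.symm) (sub_ne_zero.2 hd)
  have hev : ∀ᶠ h in 𝓝[>] (0:ℝ), rs q (xs + h * d₁) ≠ rs q (xs + h * d₂) := by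
    filter_upwards [hw.eventually_ne hne, self_mem_nhdsWithin] with h h1 h2
    intro heq
    exact h1 (by rw [heq, sub_self, zero_div])
  -- target function
  have t1 : Tendsto (fun h : ℝ => d₁ - (rs q (xs + h * d₁) / h) * (d₁ - d₂) /
      ((rs q (xs + h * d₁) - rs q (xs + h * d₂)) / h)) (𝓝[>] (0:ℝ)) (𝓝 0) := by
    have c1 : Tendsto (fun _ : ℝ => d₁) (𝓝[>] (0:ℝ)) (𝓝 d₁) := tendsto_const_nhds
    have h3 := c1.sub ((hu.mul_const (d₁ - d₂)).div hw hne)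
    have hval : d₁ - (1 - m) * d₁ * (d₁ - d₂) / ((1 - m) * (d₁ - d₂)) = 0 := by
      rw [mul_assoc, mul_div_mul_left _ _ (sub_ne_zero.2 fun h => hm1 h.symm),
        mul_div_cancel_right₀ _ (sub_ne_zero.2 hd), sub_self]
    rw [hval] at h3
    exact h3
  have t2 : Tendsto (fun h : ℝ => h⁻¹ * (h * d₁)) (𝓝[>] (0:ℝ)) (𝓝 d₁) := by
    refine tendsto_const_nhds.congr' ?_
    filter_upwards [self_mem_nhdsWithin] with h hh
    exact (inv_mul_cancel_left₀ (ne_of_gt hh) _).symm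
  refine ((t1.prodMk_nhds t2).congr' ?_)
  filter_upwards [hev, self_mem_nhdsWithin] with h hne' hh
  have hh0 : (h:ℝ) ≠ 0 := ne_of_gt hh
  have h2 : rs q (xs + h * d₁) - rs q (xs + h * d₂) ≠ 0 := sub_ne_zero.2 hne'
  have hq1 : q (xs + h * d₁) = xs + h * d₁ - rs q (xs + h * d₁) := by simp [rs]
  have hq2 : q (xs + h * d₂) = xs + h * d₂ - rs q (xs + h * d₂) := by simp [rs]
  have : Psis q ((xs, xs) + h • (d₁, d₂)) = Psis q (xs + h * d₁, xs + h * d₂) := by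
    simp [Prod.smul_mk, Prod.mk_add_mk, smul_eq_mul]
  rw [this, Psis_fix q xs hfix]
  simp only [Psis, betas, if_neg hne', Prod.mk_sub_mk, Prod.smul_mk, smul_eq_mul]
  refine Prod.ext ?_ ?_
  · show d₁ - _ = h⁻¹ * (q (xs + h * d₁) + _ * (q (xs + h * d₁) - q (xs + h * d₂)) - xs)
    rw [hq1, hq2]
    generalize rs q (xs + h * d₁) = A at h2 ⊢
    generalize rs q (xs + h * d₂) = B at h2 ⊢
    field_simp
    ring
  · show h⁻¹ * (h * d₁) = h⁻¹ * (xs + h * d₁ - xs)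
    ring_nf

/-- in the scalar case with `q'(x*) ∉ {0,1}`, the AA(1) map `Ψ : ℝ² → ℝ²` is
not Fréchet differentiable at `z* = (x*,x*)`: its directional derivative equals `(0, d₁)`
when `d₁ ≠ d₂`, but equals `((1-a) d₁, d₁)`, `a = 1 - q'(x*)`, when `d₁ = d₂`. -/
theorem stmt7 (q : ℝ → ℝ) (xs m a : ℝ) (hfix : q xs = xs) (hm : HasDerivAt q m xs)
    (hm0 : m ≠ 0) (hm1 : m ≠ 1) (ha : a = 1 - m) :
    (∀ d₁ d₂ : ℝ, d₁ ≠ d₂ →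
      Tendsto (fun h : ℝ => h⁻¹ • (Psis q ((xs, xs) + h • (d₁, d₂)) - Psis q (xs, xs)))
        (𝓝[>] 0) (𝓝 (0, d₁))) ∧
    (∀ d₁ : ℝ,
      Tendsto (fun h : ℝ => h⁻¹ • (Psis q ((xs, xs) + h • (d₁, d₁)) - Psis q (xs, xs)))
        (𝓝[>] 0) (𝓝 ((1 - a) * d₁, d₁))) ∧
    ¬ DifferentiableAt ℝ (Psis q) (xs, xs) := by
  refine ⟨fun d₁ d₂ hd => part1 q xs m hfix hm hm1 d₁ d₂ hd,
    fun d₁ => by rw [ha, sub_sub_cancel]; exact part2 q xs m hfix hm d₁, ?_⟩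
  intro hdiff
  set L := fderiv ℝ (Psis q) (xs, xs) with hLdef
  have hL : HasFDerivAt (Psis q) L (xs, xs) := hdiff.hasFDerivAt
  have dir : ∀ d : ℝ × ℝ,
      Tendsto (fun h : ℝ => h⁻¹ • (Psis q ((xs, xs) + h • d) - Psis q (xs, xs)))
        (𝓝[>] 0) (𝓝 (L d)) := by
    intro d
    have hline : HasDerivAt (fun t : ℝ => (xs, xs) + t • d) d 0 := by
      simpa using ((hasDerivAt_id (0:ℝ)).smul_const d).const_add (xs, xs)
    have hL' : HasFDerivAt (Psis q) L ((xs, xs) + (0:ℝ) • d) := by simpa using hL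
    have hcomp : HasDerivAt (fun t : ℝ => Psis q ((xs, xs) + t • d)) (L d) 0 :=
      HasFDerivAt.comp_hasDerivAt (f := fun t : ℝ => (xs, xs) + t • d) 0 hL' hline
    rw [hasDerivAt_iff_tendsto_slope] at hcomp
    have h2 := hcomp.mono_left (nhdsWithin_mono _ fun h hh => ne_of_gt hh)
    refine h2.congr fun h => ?_
    simp [slope]
  have e1 : L (1, 0) = (0, 1) :=
    tendsto_nhds_unique (dir (1, 0)) (part1 q xs m hfix hm hm1 1 0 one_ne_zero)
  have e2 : L (0, 1) = (0, 0) :=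
    tendsto_nhds_unique (dir (0, 1)) (part1 q xs m hfix hm hm1 0 1 zero_ne_one)
  have e3 : L (1, 1) = (m * 1, 1) :=
    tendsto_nhds_unique (dir (1, 1)) (part2 q xs m hfix hm 1)
  have e4 : L (1, 1) = L (1, 0) + L (0, 1) := by
    rw [← map_add]
    norm_num [Prod.mk_add_mk]
  rw [e1, e2, e3] at e4
  apply hm0
  have := congrArg Prod.fst e4
  simpa using this
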